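/- Let f : [0, ∞) → [0, ∞) be continuous, α > 0, and suppose ∫ₓ^∞ e^{αu} f(u) du < ∞ for all x and ∫ₓ^∞ e^{αu} f(u) du ∼ K x^{−1/2} as x → ∞ for some K > 0. If additionally f(x) e^{αx} is eventually monotone, then f(x) ∼ (K/2) e^{−αx} x^{−3/2} as x → ∞. -/

import Mathlib

open Filter MeasureTheory Real Set

theorem aux_split (g : ℝ → ℝ) (hint : ∀ x : ℝ, IntegrableOn g (Ioi x)) {a b : ℝ} (hab : a ≤ b) :
    (∫ u in Ioi a, g u) = (∫ u in Ioc a b, g u) + ∫ u in Ioi b, g u := by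
  rw [← setIntegral_union (Ioc_disjoint_Ioi le_rfl) measurableSet_Ioi
    ((hint a).mono_set Ioc_subset_Ioi_self) (hint b), Ioc_union_Ioi_eq_Ioi hab]

theorem aux_const_int (a b c : ℝ) (hab : a ≤ b) : (∫ _ in Ioc a b, c) = (b - a) * c := by
  rw [setIntegral_const, Real.volume_real_Ioc_of_le hab]
  simp [smul_eq_mul]

theorem aux_bounds (g T r : ℝ → ℝ) (K : ℝ) (hK : 0 < K)
    (hT : ∀ a b : ℝ, a ≤ b → T a = (∫ u in Ioc a b, g u) + T b)
    (hr : ∀ x : ℝ, r x = T x / (K * x ^ (-(1:ℝ)/2)))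
    (hint : ∀ x : ℝ, IntegrableOn g (Ioi x))
    (x0 δ x : ℝ) (hanti : AntitoneOn g (Ici x0)) (hδ : 0 < δ)
    (hx1 : 1 ≤ x) (hx0 : x0 ≤ x / (1+δ)) :
    (r x - r ((1+δ)*x) * (1+δ) ^ (-(1:ℝ)/2))/δ ≤ g x * x ^ ((3:ℝ)/2) / K ∧
    g x * x ^ ((3:ℝ)/2) / K ≤ ((1+δ) ^ ((1:ℝ)/2) * r (x/(1+δ)) - r x)*(1+δ)/δ := by
  have hxpos : (0:ℝ) < x := lt_of_lt_of_le one_pos hx1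
  have h1δ : (0:ℝ) < 1 + δ := by linarith
  set s := x ^ ((1:ℝ)/2) with hsdef
  set c := (1+δ) ^ ((1:ℝ)/2) with hcdef
  have hs : 0 < s := Real.rpow_pos_of_pos hxpos _
  have hc : 0 < c := Real.rpow_pos_of_pos h1δ _
  have en : (-(1:ℝ)/2) = -((1:ℝ)/2) := by norm_num
  have e1 : x ^ (-(1:ℝ)/2) = s⁻¹ := by rw [en, Real.rpow_neg hxpos.le]
  have e2 : ((1+δ)*x) ^ (-(1:ℝ)/2) = (c*s)⁻¹ := by
    rw [en, Real.rpow_neg (by positivity), Real.mul_rpow h1δ.le hxpos.le]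
  have e3 : (x/(1+δ)) ^ (-(1:ℝ)/2) = (s/c)⁻¹ := by
    rw [en, Real.rpow_neg (by positivity), Real.div_rpow hxpos.le h1δ.le]
  have e5 : (1+δ) ^ (-(1:ℝ)/2) = c⁻¹ := by rw [en, Real.rpow_neg h1δ.le]
  have e4 : x ^ ((3:ℝ)/2) = x * s := by
    rw [show ((3:ℝ)/2) = 1 + 1/2 by norm_num, Real.rpow_add hxpos, Real.rpow_one]
  have hwx : x / (1+δ) ≤ x := by
    rw [div_le_iff₀ h1δ]; nlinarith
  have hx0x : x0 ≤ x := le_trans hx0 hwx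
  have hxy : x ≤ (1+δ)*x := by nlinarith
  -- key1 : T x - T ((1+δ)*x) ≤ g x * (δ*x)
  have key1 : T x - T ((1+δ)*x) ≤ g x * (δ*x) := by
    have hsp := hT x ((1+δ)*x) hxy
    have hle : (∫ u in Ioc x ((1+δ)*x), g u) ≤ ∫ _ in Ioc x ((1+δ)*x), g x := by
      refine setIntegral_mono_on ((hint x).mono_set Ioc_subset_Ioi_self)
        (integrableOn_const measure_Ioc_lt_top.ne) measurableSet_Ioc ?_
      intro u hu
      exact hanti hx0x (le_trans hx0x hu.1.le) hu.1.le
    rw [aux_const_int _ _ _ hxy] at hle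
    have : ((1+δ)*x - x) * g x = g x * (δ*x) := by ring
    rw [this] at hle
    linarith
  -- key2 : g x * (δ*x/(1+δ)) ≤ T (x/(1+δ)) - T x
  have key2 : g x * (δ*x/(1+δ)) ≤ T (x/(1+δ)) - T x := by
    have hsp := hT (x/(1+δ)) x hwx
    have hle : (∫ _ in Ioc (x/(1+δ)) x, g x) ≤ ∫ u in Ioc (x/(1+δ)) x, g u := by
      refine setIntegral_mono_on (integrableOn_const measure_Ioc_lt_top.ne)
        ((hint (x/(1+δ))).mono_set Ioc_subset_Ioi_self) measurableSet_Ioc ?_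
      intro u hu
      exact hanti (le_trans hx0 hu.1.le) hx0x hu.2
    rw [aux_const_int _ _ _ hwx] at hle
    have : (x - x/(1+δ)) * g x = g x * (δ*x/(1+δ)) := by field_simp; ring
    rw [this] at hle
    linarith
  constructor
  · have eA : (r x - r ((1+δ)*x) * (1+δ) ^ (-(1:ℝ)/2))/δ
        = (T x - T ((1+δ)*x)) * s / (K*δ) := by
      rw [hr, hr, e1, e2, e5]; field_simp
    rw [eA, e4]
    calc (T x - T ((1+δ)*x)) * s / (K*δ) ≤ (g x * (δ*x)) * s / (K*δ) := by gcongr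
      _ = g x * (x*s) / K := by field_simp
  · have eB : ((1+δ) ^ ((1:ℝ)/2) * r (x/(1+δ)) - r x)*(1+δ)/δ
        = (T (x/(1+δ)) - T x) * s * (1+δ) / (K*δ) := by
      rw [hr, hr, e1, e3]; field_simp; ring
    rw [eB, e4]
    calc g x * (x*s) / K = (g x * (δ*x/(1+δ))) * s * (1+δ) / (K*δ) := by field_simp
      _ ≤ (T (x/(1+δ)) - T x) * s * (1+δ) / (K*δ) := by gcongr



theorem slopeLim (p : ℝ) :
    Tendsto (fun δ : ℝ => ((1+δ) ^ p - 1)/δ) (nhdsWithin 0 (Ioi 0)) (nhds p) := by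
  have hd : HasDerivAt (fun t : ℝ => t ^ p) p 1 := by
    have := Real.hasDerivAt_rpow_const (x := (1:ℝ)) (p := p) (Or.inl one_ne_zero)
    simpa using this
  have hs := hasDerivAt_iff_tendsto_slope.mp hd
  have hmap : Tendsto (fun δ : ℝ => 1 + δ) (nhdsWithin 0 (Ioi 0)) (nhdsWithin 1 {(1:ℝ)}ᶜ) := by
    apply tendsto_nhdsWithin_of_tendsto_nhds_of_eventually_within
    · have : Tendsto (fun δ : ℝ => 1 + δ) (nhds 0) (nhds 1) := by
        simpa using ((continuous_add_left (1:ℝ)).tendsto (0:ℝ))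
      exact this.mono_left nhdsWithin_le_nhds
    · filter_upwards [self_mem_nhdsWithin] with δ (hδ : δ ∈ Ioi 0)
      simp only [mem_compl_iff, mem_singleton_iff]
      rw [mem_Ioi] at hδ; intro h; linarith
  have h2 := hs.comp hmap
  refine h2.congr ?_
  intro δ
  simp [slope, Function.comp]
  ring_nf

theorem Llim : Tendsto (fun δ : ℝ => (1 - (1+δ) ^ (-(1:ℝ)/2))/δ) (nhdsWithin 0 (Ioi 0)) (nhds (1/2)) := by
  have h := (slopeLim (-(1:ℝ)/2)).neg
  have h2 : Tendsto (fun δ : ℝ => (1 - (1+δ) ^ (-(1:ℝ)/2))/δ) (nhdsWithin 0 (Ioi 0)) (nhds (-(-(1:ℝ)/2))) :=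
    h.congr fun δ => by ring
  have : -(-(1:ℝ)/2) = 1/2 := by norm_num
  rwa [this] at h2

theorem Ulim : Tendsto (fun δ : ℝ => ((1+δ) ^ ((1:ℝ)/2) - 1)*(1+δ)/δ) (nhdsWithin 0 (Ioi 0)) (nhds (1/2)) := by
  have h1 := slopeLim ((1:ℝ)/2)
  have h2 : Tendsto (fun δ : ℝ => 1 + δ) (nhdsWithin 0 (Ioi 0)) (nhds 1) := by
    have : Tendsto (fun δ : ℝ => 1 + δ) (nhds 0) (nhds 1) := by
      simpa using ((continuous_add_left (1:ℝ)).tendsto (0:ℝ))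
    exact this.mono_left nhdsWithin_le_nhds
  have h3 := h1.mul h2
  rw [mul_one] at h3
  exact h3.congr fun δ => by ring

theorem aux_incr (g : ℝ → ℝ) (hint : ∀ x : ℝ, IntegrableOn g (Ioi x))
    (hg0 : ∀ u : ℝ, 0 ≤ u → 0 ≤ g u) (x0 : ℝ) (hmon : MonotoneOn g (Ici x0)) :
    ∀ x : ℝ, max x0 0 ≤ x → (∫ u in Ioi x, g u) = 0 := by
  have hg0' : ∀ u : ℝ, max x0 0 ≤ u → g u = 0 := by
    intro u hu
    have hu0 : (0:ℝ) ≤ u := le_trans (le_max_right _ _) hu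
    have hux0 : x0 ≤ u := le_trans (le_max_left _ _) hu
    refine le_antisymm ?_ (hg0 u hu0)
    by_contra hpos
    push_neg at hpos
    have hbnd : ∀ n : ℕ, g u * n ≤ ∫ v in Ioi u, g v := by
      intro n
      have hun : u ≤ u + n := le_add_of_nonneg_right n.cast_nonneg
      have hsp := aux_split g hint hun
      have hle : (∫ _ in Ioc u (u+n), g u) ≤ ∫ v in Ioc u (u+n), g v := by
        refine setIntegral_mono_on (integrableOn_const measure_Ioc_lt_top.ne)
          ((hint u).mono_set Ioc_subset_Ioi_self) measurableSet_Ioc ?_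
        intro v hv
        exact hmon hux0 (le_trans hux0 hv.1.le) hv.1.le
      rw [aux_const_int _ _ _ hun] at hle
      have he : (u + n - u) * g u = g u * n := by ring
      rw [he] at hle
      have hT2 : 0 ≤ ∫ v in Ioi (u+n), g v :=
        setIntegral_nonneg measurableSet_Ioi fun v hv => hg0 v (by
          have := mem_Ioi.mp hv; linarith [n.cast_nonneg (α := ℝ)])
      linarith
    obtain ⟨n, hn⟩ := exists_nat_gt ((∫ v in Ioi u, g v) / g u)
    rw [div_lt_iff₀ hpos] at hn
    have := hbnd n
    nlinarith
  intro x hx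
  calc (∫ u in Ioi x, g u) = ∫ _ in Ioi x, (0:ℝ) := by
        refine setIntegral_congr_fun measurableSet_Ioi fun v hv => ?_
        exact hg0' v (le_trans hx (mem_Ioi.mp hv).le)
    _ = 0 := by simp


/-- From `∫ₓ^∞ e^{αu} f(u) du ∼ K x^{−1/2}` and eventual monotonicity of
`x ↦ f(x) e^{αx}`, one deduces `f(x) ∼ (K/2) e^{−αx} x^{−3/2}`. -/
theorem stmt_15 (f : ℝ → ℝ) (K α : ℝ) (hK : 0 < K) (hα : 0 < α)
    (hfc : Continuous f) (hf0 : ∀ x : ℝ, 0 ≤ x → 0 ≤ f x)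
    (hint : ∀ x : ℝ, IntegrableOn (fun u => Real.exp (α * u) * f u) (Ioi x))
    (hasym : Tendsto (fun x => (∫ u in Ioi x, Real.exp (α * u) * f u) /
        (K * x ^ (-(1 : ℝ) / 2))) atTop (nhds 1))
    (hmono : ∃ x0 : ℝ, MonotoneOn (fun x => f x * Real.exp (α * x)) (Ici x0) ∨
        AntitoneOn (fun x => f x * Real.exp (α * x)) (Ici x0)) :
    Tendsto (fun x => f x / (K / 2 * Real.exp (-α * x) * x ^ (-(3 : ℝ) / 2)))
      atTop (nhds 1) := by
  set g : ℝ → ℝ := fun u => Real.exp (α * u) * f u with hgdef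
  have hg0 : ∀ u : ℝ, 0 ≤ u → 0 ≤ g u := fun u hu =>
    mul_nonneg (Real.exp_pos _).le (hf0 u hu)
  obtain ⟨x0, hc⟩ := hmono
  rcases hc with hmon | hanti
  · -- increasing case: contradiction
    exfalso
    have hmon' : MonotoneOn g (Ici x0) := fun a ha b hb hab => by
      have := hmon ha hb hab
      simpa [hgdef, mul_comm] using this
    have hzero := aux_incr g hint hg0 x0 hmon'
    have h0 : Tendsto (fun x => (∫ u in Ioi x, g u) / (K * x ^ (-(1:ℝ)/2)))
        atTop (nhds 0) := by
      refine tendsto_const_nhds.congr' ?_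
      filter_upwards [eventually_ge_atTop (max x0 0)] with x hx
      rw [hzero x hx, zero_div]
    exact absurd (tendsto_nhds_unique hasym h0) one_ne_zero
  · -- antitone case
    have hanti' : AntitoneOn g (Ici x0) := fun a ha b hb hab => by
      have := hanti ha hb hab
      simpa [hgdef, mul_comm] using this
    set r : ℝ → ℝ := fun x => (∫ u in Ioi x, g u) / (K * x ^ (-(1:ℝ)/2)) with hrdef
    have hT : ∀ a b : ℝ, a ≤ b → (∫ u in Ioi a, g u) = (∫ u in Ioc a b, g u) + ∫ u in Ioi b, g u :=
      fun a b hab => aux_split g hint hab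
    -- key limit
    have key : Tendsto (fun x => g x * x ^ ((3:ℝ)/2) / K) atTop (nhds (1/2)) := by
      rw [Metric.tendsto_atTop]
      intro ε hε
      have hε3 : (0:ℝ) < ε/3 := by linarith
      have hevδ : ∀ᶠ δ in nhdsWithin (0:ℝ) (Ioi 0),
          (|((1 - (1+δ) ^ (-(1:ℝ)/2))/δ) - 1/2| < ε/3 ∧
           |(((1+δ) ^ ((1:ℝ)/2) - 1)*(1+δ)/δ) - 1/2| < ε/3) ∧ 0 < δ := by
        have h1 := Metric.tendsto_nhds.mp Llim (ε/3) hε3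
        have h2 := Metric.tendsto_nhds.mp Ulim (ε/3) hε3
        filter_upwards [h1, h2, self_mem_nhdsWithin] with δ h1 h2 h3
        rw [Real.dist_eq] at h1 h2
        exact ⟨⟨h1, h2⟩, mem_Ioi.mp h3⟩
      obtain ⟨δ, ⟨hLδ, hUδ⟩, hδpos⟩ := hevδ.exists
      have h1δ : (0:ℝ) < 1 + δ := by linarith
      -- limits of A and B in x
      have hr2 : Tendsto (fun x => r ((1+δ)*x)) atTop (nhds 1) :=
        hasym.comp (tendsto_id.const_mul_atTop h1δ)
      have hr3 : Tendsto (fun x => r (x/(1+δ))) atTop (nhds 1) :=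
        hasym.comp (tendsto_id.atTop_div_const h1δ)
      have hA : Tendsto (fun x => (r x - r ((1+δ)*x) * (1+δ) ^ (-(1:ℝ)/2))/δ) atTop
          (nhds ((1 - (1+δ) ^ (-(1:ℝ)/2))/δ)) := by
        have := (hasym.sub (hr2.mul_const ((1+δ) ^ (-(1:ℝ)/2)))).div_const δ
        rw [one_mul] at this
        exact this
      have hB : Tendsto (fun x => ((1+δ) ^ ((1:ℝ)/2) * r (x/(1+δ)) - r x)*(1+δ)/δ) atTop
          (nhds (((1+δ) ^ ((1:ℝ)/2) - 1)*(1+δ)/δ)) := by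
        have := (((hr3.const_mul ((1+δ) ^ ((1:ℝ)/2))).sub hasym).mul_const (1+δ)).div_const δ
        rw [mul_one] at this
        exact this
      have hA' := Metric.tendsto_nhds.mp hA (ε/3) hε3
      have hB' := Metric.tendsto_nhds.mp hB (ε/3) hε3
      have hev : ∀ᶠ x in atTop, dist (g x * x ^ ((3:ℝ)/2) / K) (1/2) < ε := by
        rw [eventually_atTop] at hA' hB' ⊢
        obtain ⟨N1, hN1⟩ := hA'
        obtain ⟨N2, hN2⟩ := hB'
        refine ⟨max (max N1 N2) (max 1 ((1+δ)*(max x0 0) + 1)), fun x hx => ?_⟩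
        have hx1 : (1:ℝ) ≤ x := le_trans (le_trans (le_max_left _ _) (le_max_right _ _)) hx
        have hxM : (1+δ)*(max x0 0) + 1 ≤ x :=
          le_trans (le_trans (le_max_right _ _) (le_max_right _ _)) hx
        have hx0' : x0 ≤ x / (1+δ) := by
          rw [le_div_iff₀ h1δ]
          nlinarith [le_max_left x0 (0:ℝ), le_max_right x0 (0:ℝ), mul_le_mul_of_nonneg_left (le_max_left x0 (0:ℝ)) h1δ.le]
        obtain ⟨hlow, hup⟩ := aux_bounds g (fun x => ∫ u in Ioi x, g u) r K hK hT
          (fun _ => rfl) hint x0 δ x hanti' hδpos hx1 hx0'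
        have hA1 := hN1 x (le_trans (le_trans (le_max_left _ _) (le_max_left _ _)) hx)
        have hB1 := hN2 x (le_trans (le_trans (le_max_right _ _) (le_max_left _ _)) hx)
        rw [Real.dist_eq] at hA1 hB1 ⊢
        rw [abs_lt] at hA1 hB1 hLδ hUδ ⊢
        obtain ⟨a1, a2⟩ := hA1; obtain ⟨b1, b2⟩ := hB1
        obtain ⟨l1, l2⟩ := hLδ; obtain ⟨u1, u2⟩ := hUδ
        constructor <;> [nlinarith; nlinarith]
      exact eventually_atTop.mp hev
    -- final conversion
    have key2 : Tendsto (fun x => 2 * (g x * x ^ ((3:ℝ)/2) / K)) atTop (nhds 1) := by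
      have := key.const_mul (2:ℝ)
      norm_num at this
      exact this
    refine key2.congr' ?_
    filter_upwards [eventually_ge_atTop (1:ℝ)] with x hx
    have hxpos : (0:ℝ) < x := lt_of_lt_of_le one_pos hx
    have e1 : Real.exp (-α * x) = (Real.exp (α * x))⁻¹ := by
      rw [neg_mul, Real.exp_neg]
    have e2 : x ^ (-(3:ℝ)/2) = (x ^ ((3:ℝ)/2))⁻¹ := by
      rw [show (-(3:ℝ)/2) = -((3:ℝ)/2) by norm_num, Real.rpow_neg hxpos.le]
    have hx32 : (0:ℝ) < x ^ ((3:ℝ)/2) := Real.rpow_pos_of_pos hxpos _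
    rw [e1, e2]
    have hexp : Real.exp (α * x) ≠ 0 := (Real.exp_pos _).ne'
    show 2 * (Real.exp (α * x) * f x * x ^ ((3:ℝ)/2) / K) = _
    field_simp
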